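/- Let I ⊆ J be homogeneous ideals in R = K[x_0,...,x_n] and let A ∈ R be a homogeneous form of degree d with I : A = I. Then for all t, the Hilbert functions satisfy h_{R/(I + A·J)}(t) = h_{R/I}(t) − h_{R/I}(t−d) + h_{R/J}(t−d). -/

import Mathlib

open MvPolynomial

/-- A monomial ideal: an ideal generated by monomials. -/
def IsMonomialIdeal {K : Type} [Field K] {m : ℕ} (J : Ideal (MvPolynomial (Fin m) K)) : Prop :=
  ∃ G : Set (Fin m →₀ ℕ), J = Ideal.span ((fun d => (monomial d (1 : K))) '' G)

/-- `d` is the exponent vector of a minimal monomial generator of the monomial ideal `J`. -/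
def IsMinGen {K : Type} [Field K] {m : ℕ} (J : Ideal (MvPolynomial (Fin m) K))
    (d : Fin m →₀ ℕ) : Prop :=
  (monomial d (1 : K)) ∈ J ∧
    ∀ i : Fin m, 0 < d i → (monomial (d - Finsupp.single i 1) (1 : K)) ∉ J

/-- Borel-fixed monomial ideal: stable under the moves `m ↦ (x_j/x_i)·m` for `j < i`. -/
def IsBorelFixed {K : Type} [Field K] {m : ℕ} (J : Ideal (MvPolynomial (Fin m) K)) : Prop :=
  IsMonomialIdeal J ∧
    ∀ d : Fin m →₀ ℕ, (monomial d (1 : K)) ∈ J → ∀ i j : Fin m, j < i → 0 < d i →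
      (monomial (d - Finsupp.single i 1 + Finsupp.single j 1) (1 : K)) ∈ J

/-- The inclusion `K[x_2,...,x_{n+1}] → K[x_1,...,x_{n+1}]` (variable index 0 is `x_1`). -/
noncomputable def varShift (K : Type) [Field K] (n : ℕ) :
    MvPolynomial (Fin n) K →ₐ[K] MvPolynomial (Fin (n + 1)) K :=
  rename Fin.succ

/-- `I_j = (J : x_1^j) ∩ K[x_2,...,x_{n+1}]`, an ideal of `T = K[x_2,...,x_{n+1}]`. -/
noncomputable def sliceIdeal {K : Type} [Field K] {n : ℕ}
    (J : Ideal (MvPolynomial (Fin (n + 1)) K)) (j : ℕ) : Ideal (MvPolynomial (Fin n) K) :=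
  Ideal.comap (varShift K n) (J.colon (Ideal.span {(X 0 : MvPolynomial (Fin (n + 1)) K) ^ j}))

/-- The Hilbert function of `S/J`: the `K`-dimension of the degree `s` part. -/
noncomputable def hilb {K : Type} [Field K] {m : ℕ}
    (J : Ideal (MvPolynomial (Fin m) K)) (s : ℕ) : ℕ :=
  Module.finrank K (homogeneousSubmodule (Fin m) K s) -
    Module.finrank K
      (homogeneousSubmodule (Fin m) K s ⊓ Submodule.restrictScalars K J :
        Submodule K (MvPolynomial (Fin m) K))

/-- A homogeneous ideal (with respect to total degree). -/
def IsHomogeneousIdeal {K : Type} [Field K] {m : ℕ}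
    (I : Ideal (MvPolynomial (Fin m) K)) : Prop :=
  ∀ p ∈ I, ∀ k : ℕ, (homogeneousComponent k p) ∈ I

/-- `α` is the initial degree of `J`: the least degree of a nonzero (homogeneous) element. -/
def IsInitialDegree {K : Type} [Field K] {m : ℕ}
    (J : Ideal (MvPolynomial (Fin m) K)) (α : ℕ) : Prop :=
  IsLeast {k : ℕ | ∃ p ∈ J, p ≠ 0 ∧ MvPolynomial.IsHomogeneous p k} α

/-- The height (codimension) of an ideal: the infimum of heights of primes containing it. -/
noncomputable def idealHeight {R : Type} [CommRing R] (I : Ideal R) : ℕ∞ :=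
  ⨅ (P : PrimeSpectrum R) (_ : I ≤ P.asIdeal), Order.height P

/-- `S/J` is Cohen-Macaulay: there is a regular sequence inside the irrelevant maximal
ideal of length equal to the Krull dimension of `S/J`. -/
def IsCMQuotient {K : Type} [Field K] {m : ℕ} (J : Ideal (MvPolynomial (Fin m) K)) : Prop :=
  ∃ rs : List (MvPolynomial (Fin m) K),
    (∀ f ∈ rs, f ∈ Ideal.span (Set.range (X : Fin m → MvPolynomial (Fin m) K))) ∧
    RingTheory.Sequence.IsRegular (MvPolynomial (Fin m) K ⧸ J) rs ∧
    (rs.length : WithBot ℕ∞) = ringKrullDim (MvPolynomial (Fin m) K ⧸ J)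

/-- An unmixed ideal: all associated primes of `R/I` have the same height, namely that of `I`. -/
def IsUnmixed {K : Type} [Field K] {m : ℕ} (I : Ideal (MvPolynomial (Fin m) K)) : Prop :=
  ∀ P ∈ associatedPrimes (MvPolynomial (Fin m) K) (MvPolynomial (Fin m) K ⧸ I),
    idealHeight P = idealHeight I

/-- Degree-lexicographic order on exponent vectors: `d > e`. -/
def DegLexGT {m : ℕ} (d e : Fin m →₀ ℕ) : Prop :=
  (e.sum fun _ k => k) < (d.sum fun _ k => k) ∨
    ((d.sum fun _ k => k) = (e.sum fun _ k => k) ∧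
      ∃ i : Fin m, (∀ k < i, d k = e k) ∧ e i < d i)

/-- A lex-segment monomial ideal. -/
def IsLexSegment {K : Type} [Field K] {m : ℕ} (J : Ideal (MvPolynomial (Fin m) K)) : Prop :=
  IsMonomialIdeal J ∧
    ∀ d e : Fin m →₀ ℕ, (d.sum fun _ k => k) = (e.sum fun _ k => k) →
      DegLexGT d e → (monomial e (1 : K)) ∈ J → (monomial d (1 : K)) ∈ J

/-- `macaulayBound d a = a^{⟨d⟩}`, the Macaulay upper bound computed from the `d`-th
binomial expansion of `a`. -/
def macaulayBound : ℕ → ℕ → ℕ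
  | _, 0 => 0
  | 0, _ + 1 => 0
  | d + 1, a + 1 =>
    let k := Nat.findGreatest (fun k => Nat.choose k (d + 1) ≤ a + 1) (a + d + 2)
    Nat.choose (k + 1) (d + 2) + macaulayBound d (a + 1 - Nat.choose k (d + 1))

/-- The first difference of a numerical function (with `f(-1) = 0`). -/
def delta (f : ℕ → ℤ) : ℕ → ℤ
  | 0 => f 0
  | n + 1 => f (n + 1) - f n

/-- An O-sequence: `f(0) = 1`, nonnegative, satisfying Macaulay's growth condition. -/
def IsOSequence (f : ℕ → ℤ) : Prop :=
  f 0 = 1 ∧ (∀ t, 0 ≤ f t) ∧ ∀ t, 1 ≤ t → f (t + 1) ≤ (macaulayBound t (f t).toNat : ℤ)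


section BDLAux

open MvPolynomial

lemma hc_mul_hom {K : Type} [Field K] {m d : ℕ} (A g : MvPolynomial (Fin m) K)
    (hA : A.IsHomogeneous d) (t : ℕ) :
    homogeneousComponent t (A * g) =
      if d ≤ t then A * homogeneousComponent (t - d) g else 0 := by
  conv_lhs => rw [← g.sum_homogeneousComponent]
  rw [Finset.mul_sum, map_sum]
  have hterm : ∀ i ∈ Finset.range (g.totalDegree + 1),
      homogeneousComponent t (A * homogeneousComponent i g) =
        if i = t - d ∧ d ≤ t then A * homogeneousComponent i g else 0 := by
    intro i _
    have hmem : A * homogeneousComponent i g ∈ homogeneousSubmodule (Fin m) K (d + i) :=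
      (mem_homogeneousSubmodule _ _).2 (hA.mul (homogeneousComponent_isHomogeneous i g))
    rw [homogeneousComponent_of_mem hmem]
    by_cases h : t = d + i
    · rw [if_pos h, if_pos ⟨by omega, by omega⟩]
    · rw [if_neg h, if_neg (by omega)]
  rw [Finset.sum_congr rfl hterm]
  by_cases hd : d ≤ t
  · simp only [hd, and_true]
    rw [Finset.sum_ite_eq' (Finset.range (g.totalDegree + 1)) (t - d)
      (fun i => A * homogeneousComponent i g), if_pos trivial]
    split_ifs with h
    · rfl
    · rw [homogeneousComponent_eq_zero, mul_zero]
      simp only [Finset.mem_range] at h; omega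
  · rw [if_neg hd]
    apply Finset.sum_eq_zero
    intro i _
    rw [if_neg (by omega)]

variable {K : Type} [Field K] {n d : ℕ}
  (I J : Ideal (MvPolynomial (Fin (n + 1)) K))
  (A : MvPolynomial (Fin (n + 1)) K)

lemma piece_sup (hI : IsHomogeneousIdeal I) (hJ : IsHomogeneousIdeal J)
    (hA : A.IsHomogeneous d) {t : ℕ} (hd : d ≤ t) :
    homogeneousSubmodule (Fin (n + 1)) K t ⊓
        Submodule.restrictScalars K (I ⊔ Ideal.span {A} * J) =
      (homogeneousSubmodule (Fin (n + 1)) K t ⊓ Submodule.restrictScalars K I) ⊔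
        Submodule.map (LinearMap.mulLeft K A)
          (homogeneousSubmodule (Fin (n + 1)) K (t - d) ⊓ Submodule.restrictScalars K J) := by
  apply le_antisymm
  · rintro p ⟨hp1, hp2⟩
    obtain ⟨q, hq, s, hs, rfl⟩ := Submodule.mem_sup.1 hp2
    obtain ⟨g, hg, rfl⟩ := Ideal.mem_span_singleton_mul.1 hs
    have hP : homogeneousComponent t (q + A * g) = q + A * g := by
      rw [homogeneousComponent_of_mem hp1, if_pos rfl]
    rw [← hP, map_add, hc_mul_hom A g hA t, if_pos hd]
    apply Submodule.add_mem_sup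
    · exact ⟨homogeneousComponent_mem t q, hI q hq t⟩
    · exact Submodule.mem_map.2 ⟨homogeneousComponent (t - d) g,
        ⟨homogeneousComponent_mem _ g, hJ g hg _⟩, rfl⟩
  · apply sup_le
    · rintro x ⟨hx1, hx2⟩
      exact ⟨hx1, Ideal.mem_sup_left hx2⟩
    · intro x hx
      obtain ⟨g, ⟨hg1, hg2⟩, rfl⟩ := Submodule.mem_map.1 hx
      refine ⟨?_, ?_⟩
      · show A * g ∈ _
        have := hA.mul ((mem_homogeneousSubmodule _ _).1 hg1)
        rw [Nat.add_sub_cancel' hd] at this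
        exact (mem_homogeneousSubmodule _ _).2 this
      · exact Ideal.mem_sup_right (Ideal.mem_span_singleton_mul.2 ⟨g, hg2, rfl⟩)

lemma piece_sup' (hI : IsHomogeneousIdeal I)
    (hA : A.IsHomogeneous d) {t : ℕ} (hd : ¬ d ≤ t) :
    homogeneousSubmodule (Fin (n + 1)) K t ⊓
        Submodule.restrictScalars K (I ⊔ Ideal.span {A} * J) =
      homogeneousSubmodule (Fin (n + 1)) K t ⊓ Submodule.restrictScalars K I := by
  apply le_antisymm
  · rintro p ⟨hp1, hp2⟩
    obtain ⟨q, hq, s, hs, rfl⟩ := Submodule.mem_sup.1 hp2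
    obtain ⟨g, hg, rfl⟩ := Ideal.mem_span_singleton_mul.1 hs
    have hP : homogeneousComponent t (q + A * g) = q + A * g := by
      rw [homogeneousComponent_of_mem hp1, if_pos rfl]
    rw [← hP, map_add, hc_mul_hom A g hA t, if_neg hd, add_zero]
    exact ⟨homogeneousComponent_mem t q, hI q hq t⟩
  · rintro x ⟨hx1, hx2⟩
    exact ⟨hx1, Ideal.mem_sup_left hx2⟩

lemma piece_inf (hIJ : I ≤ J) (hcol : I.colon (Ideal.span {A}) = I)
    (hA : A.IsHomogeneous d) {t : ℕ} (hd : d ≤ t) :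
    (homogeneousSubmodule (Fin (n + 1)) K t ⊓ Submodule.restrictScalars K I) ⊓
        Submodule.map (LinearMap.mulLeft K A)
          (homogeneousSubmodule (Fin (n + 1)) K (t - d) ⊓ Submodule.restrictScalars K J) =
      Submodule.map (LinearMap.mulLeft K A)
        (homogeneousSubmodule (Fin (n + 1)) K (t - d) ⊓ Submodule.restrictScalars K I) := by
  apply le_antisymm
  · rintro x ⟨⟨hx1, hx2⟩, hx3⟩
    obtain ⟨g, ⟨hg1, hg2⟩, rfl⟩ := Submodule.mem_map.1 hx3
    have hgI : g ∈ I := by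
      rw [← hcol]
      exact Ideal.mem_colon_span_singleton.2 (by rw [mul_comm]; exact hx2)
    exact Submodule.mem_map.2 ⟨g, ⟨hg1, hgI⟩, rfl⟩
  · intro x hx
    obtain ⟨g, ⟨hg1, hg2⟩, rfl⟩ := Submodule.mem_map.1 hx
    refine ⟨⟨?_, I.mul_mem_left A hg2⟩, Submodule.mem_map.2 ⟨g, ⟨hg1, hIJ hg2⟩, rfl⟩⟩
    show A * g ∈ _
    have := hA.mul ((mem_homogeneousSubmodule _ _).1 hg1)
    rw [Nat.add_sub_cancel' hd] at this
    exact (mem_homogeneousSubmodule _ _).2 this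

instance homSubFD {m s : ℕ} : FiniteDimensional K
    (homogeneousSubmodule (Fin m) K s : Submodule K (MvPolynomial (Fin m) K)) := by
  apply Submodule.finiteDimensional_of_le (S₂ := restrictTotalDegree (Fin m) K s)
  intro p hp
  exact (mem_restrictTotalDegree _ _ _).2 ((mem_homogeneousSubmodule _ _).1 hp).totalDegree_le

end BDLAux

set_option maxHeartbeats 1600000

/-- Hilbert function of a basic double G-link. -/
theorem basic_double_link_hilbert {K : Type} [Field K] {n d : ℕ}
    (I J : Ideal (MvPolynomial (Fin (n + 1)) K))
    (hI : IsHomogeneousIdeal I) (hJ : IsHomogeneousIdeal J) (hIJ : I ≤ J)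
    (A : MvPolynomial (Fin (n + 1)) K)
    (hA : A ∈ homogeneousSubmodule (Fin (n + 1)) K d)
    (hcol : I.colon (Ideal.span {A}) = I) :
    ∀ t : ℕ, (hilb (I ⊔ Ideal.span {A} * J) t : ℤ) =
      (hilb I t : ℤ) - (if d ≤ t then (hilb I (t - d) : ℤ) else 0) +
        (if d ≤ t then (hilb J (t - d) : ℤ) else 0) := by
  intro t
  by_cases hA0 : A = 0
  · have hIT : I = ⊤ := by
      rw [← hcol]
      ext r
      simp [Ideal.mem_colon_span_singleton, hA0]
    have hJT : J = ⊤ := top_unique (hIT ▸ hIJ)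
    have hsupT : I ⊔ Ideal.span {A} * J = ⊤ := by rw [hIT]; simp
    have h0 : ∀ s, hilb (⊤ : Ideal (MvPolynomial (Fin (n + 1)) K)) s = 0 := by
      intro s
      have htop : homogeneousSubmodule (Fin (n + 1)) K s ⊓ (⊤ : Submodule K (MvPolynomial (Fin (n + 1)) K)) = homogeneousSubmodule (Fin (n + 1)) K s := inf_top_eq _
      simp only [hilb]
      rw [Submodule.restrictScalars_top, htop, Nat.sub_self]
    rw [hsupT, hIT, hJT]
    simp [h0]
  · have hAh : A.IsHomogeneous d := (mem_homogeneousSubmodule _ _).1 hA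
    have hinj : Function.Injective (LinearMap.mulLeft K A) := fun x y h =>
      mul_left_cancel₀ hA0 (by simpa using h)
    by_cases hd : d ≤ t
    · have hsup := piece_sup I J A hI hJ hAh hd
      have hinf := piece_inf I J A hIJ hcol hAh hd
      haveI fU : FiniteDimensional K
          (homogeneousSubmodule (Fin (n + 1)) K t ⊓ Submodule.restrictScalars K I :
            Submodule K (MvPolynomial (Fin (n + 1)) K)) :=
        Submodule.finiteDimensional_of_le inf_le_left
      haveI fJ' : FiniteDimensional K
          (homogeneousSubmodule (Fin (n + 1)) K (t - d) ⊓ Submodule.restrictScalars K J :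
            Submodule K (MvPolynomial (Fin (n + 1)) K)) :=
        Submodule.finiteDimensional_of_le inf_le_left
      haveI fI' : FiniteDimensional K
          (homogeneousSubmodule (Fin (n + 1)) K (t - d) ⊓ Submodule.restrictScalars K I :
            Submodule K (MvPolynomial (Fin (n + 1)) K)) :=
        Submodule.finiteDimensional_of_le inf_le_left
      haveI fV : FiniteDimensional K
          (Submodule.map (LinearMap.mulLeft K A)
            (homogeneousSubmodule (Fin (n + 1)) K (t - d) ⊓ Submodule.restrictScalars K J)) :=
        (Submodule.equivMapOfInjective _ hinj _).finiteDimensional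
      have e1 := Submodule.finrank_sup_add_finrank_inf_eq
        (homogeneousSubmodule (Fin (n + 1)) K t ⊓ Submodule.restrictScalars K I)
        (Submodule.map (LinearMap.mulLeft K A)
          (homogeneousSubmodule (Fin (n + 1)) K (t - d) ⊓ Submodule.restrictScalars K J))
      rw [hinf] at e1
      have e2 : Module.finrank K
          (Submodule.map (LinearMap.mulLeft K A)
            (homogeneousSubmodule (Fin (n + 1)) K (t - d) ⊓ Submodule.restrictScalars K J)) =
          Module.finrank K
            (homogeneousSubmodule (Fin (n + 1)) K (t - d) ⊓ Submodule.restrictScalars K J :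
              Submodule K (MvPolynomial (Fin (n + 1)) K)) :=
        (LinearEquiv.finrank_eq (Submodule.equivMapOfInjective _ hinj _)).symm
      have e3 : Module.finrank K
          (Submodule.map (LinearMap.mulLeft K A)
            (homogeneousSubmodule (Fin (n + 1)) K (t - d) ⊓ Submodule.restrictScalars K I)) =
          Module.finrank K
            (homogeneousSubmodule (Fin (n + 1)) K (t - d) ⊓ Submodule.restrictScalars K I :
              Submodule K (MvPolynomial (Fin (n + 1)) K)) :=
        (LinearEquiv.finrank_eq (Submodule.equivMapOfInjective _ hinj _)).symm
      rw [e2, e3] at e1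
      have b1 : Module.finrank K
          (homogeneousSubmodule (Fin (n + 1)) K t ⊓ Submodule.restrictScalars K I :
            Submodule K (MvPolynomial (Fin (n + 1)) K)) ≤
          Module.finrank K (homogeneousSubmodule (Fin (n + 1)) K t) :=
        Submodule.finrank_mono inf_le_left
      have b2 : Module.finrank K
          ((homogeneousSubmodule (Fin (n + 1)) K t ⊓ Submodule.restrictScalars K I) ⊔
            Submodule.map (LinearMap.mulLeft K A)
              (homogeneousSubmodule (Fin (n + 1)) K (t - d) ⊓ Submodule.restrictScalars K J) :
            Submodule K (MvPolynomial (Fin (n + 1)) K)) ≤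
          Module.finrank K (homogeneousSubmodule (Fin (n + 1)) K t) :=
        Submodule.finrank_mono (hsup ▸ inf_le_left)
      have b3 : Module.finrank K
          (homogeneousSubmodule (Fin (n + 1)) K (t - d) ⊓ Submodule.restrictScalars K I :
            Submodule K (MvPolynomial (Fin (n + 1)) K)) ≤
          Module.finrank K (homogeneousSubmodule (Fin (n + 1)) K (t - d)) :=
        Submodule.finrank_mono inf_le_left
      have b4 : Module.finrank K
          (homogeneousSubmodule (Fin (n + 1)) K (t - d) ⊓ Submodule.restrictScalars K J :
            Submodule K (MvPolynomial (Fin (n + 1)) K)) ≤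
          Module.finrank K (homogeneousSubmodule (Fin (n + 1)) K (t - d)) :=
        Submodule.finrank_mono inf_le_left
      simp only [if_pos hd, hilb]
      rw [hsup]
      omega
    · have h := piece_sup' I J A hI hAh hd
      simp only [if_neg hd, hilb, sub_zero, add_zero]
      rw [h]
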